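/- Let n ≥ 1 be an integer, α ∈ (0,1), 0 < β < n reals, t > 0 and C > 0. Let K : ℝⁿ → ℂ be measurable and suppose |K(x)| ≤ C·t^{−α}·|x|^{β−n} for almost every x with |x| ≤ t^{α/β}, and |K(x)| ≤ C·t^{α}·|x|^{−n−β} for almost every x with |x| ≥ t^{α/β}. Then: (a) for every s ∈ [1, n/(n−β)) there is a constant C′ depending only on n, α, β, s with ‖K‖_{L^s(ℝⁿ)} ≤ C·C′·t^{−(αn/β)(1−1/s)}; and (b) there is a constant C″ depending only on n, α, β such that for every λ > 0, λ · (vol{x ∈ ℝⁿ : |K(x)| > λ})^{(n−β)/n} ≤ C·C″·t^{−α}. -/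

import Mathlib

open MeasureTheory Set ENNReal Metric

lemma my_rpow_mul_rpow {C t : ℝ} (hC : 0 < C) (ht : 0 < t) {a b c d e f : ℝ}
    (h1 : a + b = f) (h2 : c * a + d * b = e) :
    (C * t ^ c) ^ a * (C * t ^ d) ^ b = C ^ f * t ^ e := by
  rw [Real.mul_rpow hC.le (Real.rpow_nonneg ht.le _),
    Real.mul_rpow hC.le (Real.rpow_nonneg ht.le _),
    ← Real.rpow_mul ht.le, ← Real.rpow_mul ht.le]
  calc C ^ a * t ^ (c * a) * (C ^ b * t ^ (d * b))
      = (C ^ a * C ^ b) * (t ^ (c * a) * t ^ (d * b)) := by ring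
    _ = C ^ (a + b) * t ^ (c * a + d * b) := by
        rw [← Real.rpow_add hC, ← Real.rpow_add ht]
    _ = C ^ f * t ^ e := by rw [h1, h2]

lemma my_lint_Ioc {c e : ℝ} (hc : 0 < c) (he : -1 < e) :
    ∫⁻ x in Ioc (0 : ℝ) c, ENNReal.ofReal (x ^ e) =
      ENNReal.ofReal (c ^ (e + 1) / (e + 1)) := by
  have hint : IntegrableOn (fun x : ℝ => x ^ e) (Ioc 0 c) volume := by
    rw [← intervalIntegrable_iff_integrableOn_Ioc_of_le hc.le]
    exact intervalIntegral.intervalIntegrable_rpow' he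
  rw [← ofReal_integral_eq_lintegral_ofReal hint ?nn]
  case nn =>
    filter_upwards [ae_restrict_mem measurableSet_Ioc] with x hx
    exact Real.rpow_nonneg hx.1.le e
  congr 1
  rw [← intervalIntegral.integral_of_le hc.le, integral_rpow (Or.inl he)]
  rw [Real.zero_rpow (by linarith : e + 1 ≠ 0)]
  ring

lemma my_lint_Ioi {c e : ℝ} (hc : 0 < c) (he : e < -1) :
    ∫⁻ x in Ioi c, ENNReal.ofReal (x ^ e) =
      ENNReal.ofReal (c ^ (e + 1) / (-(e + 1))) := by
  have hint : IntegrableOn (fun x : ℝ => x ^ e) (Ioi c) volume :=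
    integrableOn_Ioi_rpow_of_lt he hc
  rw [← ofReal_integral_eq_lintegral_ofReal hint ?nn]
  case nn =>
    filter_upwards [ae_restrict_mem measurableSet_Ioi] with x hx
    exact Real.rpow_nonneg (hc.trans hx).le e
  rw [integral_Ioi_rpow_of_lt he hc, div_neg, neg_div]

lemma my_meas_bound (n : ℕ) (hn : 1 ≤ n) (α β : ℝ) (hα0 : 0 < α)
    (hβ0 : 0 < β) (hβn : β < n) (t C : ℝ) (ht : 0 < t) (hC : 0 < C)
    (K : EuclideanSpace ℝ (Fin n) → ℂ)
    (h1 : ∀ᵐ x : EuclideanSpace ℝ (Fin n) ∂volume,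
      ‖x‖ ≤ t ^ (α / β) → ‖K x‖ ≤ C * t ^ (-α) * ‖x‖ ^ (β - n))
    (h2 : ∀ᵐ x : EuclideanSpace ℝ (Fin n) ∂volume,
      t ^ (α / β) ≤ ‖x‖ → ‖K x‖ ≤ C * t ^ α * ‖x‖ ^ (-(n : ℝ) - β))
    (lam : ℝ) (hlam : 0 < lam) :
    volume {x : EuclideanSpace ℝ (Fin n) | lam < ‖K x‖} ≤
      if C * t ^ (-(α * n / β)) < lam then
        ENNReal.ofReal ((C * t ^ (-α) / lam) ^ ((n : ℝ) / ((n : ℝ) - β))) *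
          volume (ball (0 : EuclideanSpace ℝ (Fin n)) 1)
      else
        ENNReal.ofReal ((C * t ^ α / lam) ^ ((n : ℝ) / ((n : ℝ) + β))) *
          volume (ball (0 : EuclideanSpace ℝ (Fin n)) 1) := by
  have hn0 : (0 : ℝ) < n := by exact_mod_cast hn
  have hnβ : 0 < (n : ℝ) - β := sub_pos.2 hβn
  have hnβ' : 0 < (n : ℝ) + β := by linarith
  have hR : 0 < t ^ (α / β) := Real.rpow_pos_of_pos ht _
  have hA : 0 < C * t ^ (-α) := by positivity
  have hB : 0 < C * t ^ α := by positivity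
  have hbne : β ≠ 0 := hβ0.ne'
  have hkey : C * t ^ (-(α * n / β)) = C * t ^ α * (t ^ (α / β)) ^ (-(n : ℝ) - β) := by
    rw [← Real.rpow_mul ht.le, mul_assoc, ← Real.rpow_add ht]
    congr 1
    field_simp
    ring
  have hpow : ∀ (x c : ℝ), 0 ≤ x → (x ^ c⁻¹) ^ (n : ℕ) = x ^ ((n : ℝ) / c) := by
    intro x c hx
    rw [← Real.rpow_natCast (x ^ c⁻¹) n, ← Real.rpow_mul hx, inv_mul_eq_div]
  split_ifs with hcase
  · -- large lam : contained in small ball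
    set r1 : ℝ := (C * t ^ (-α) / lam) ^ ((n : ℝ) - β)⁻¹ with hr1def
    have hr1 : 0 < r1 := Real.rpow_pos_of_pos (div_pos hA hlam) _
    calc volume {x : EuclideanSpace ℝ (Fin n) | lam < ‖K x‖}
        ≤ volume (ball (0 : EuclideanSpace ℝ (Fin n)) r1) := by
          apply measure_mono_ae
          filter_upwards [h1, h2] with x hx1 hx2 hmem0
          have hmem : lam < ‖K x‖ := hmem0
          show x ∈ ball (0 : EuclideanSpace ℝ (Fin n)) r1
          rw [mem_ball_zero_iff]
          rcases le_total ‖x‖ (t ^ (α / β)) with h | h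
          · have hlt : lam < C * t ^ (-α) * ‖x‖ ^ (β - (n : ℝ)) :=
              lt_of_lt_of_le hmem (hx1 h)
            have hx0 : 0 < ‖x‖ := by
              rcases (norm_nonneg x).lt_or_eq with h0 | h0
              · exact h0
              · exfalso
                rw [← h0, Real.zero_rpow (by linarith : β - (n : ℝ) ≠ 0),
                  mul_zero] at hlt
                linarith
            have hrw : ‖x‖ ^ (β - (n : ℝ)) = (‖x‖ ^ ((n : ℝ) - β))⁻¹ := by
              rw [← Real.rpow_neg (norm_nonneg x)]
              congr 1
              ring
            rw [hrw] at hlt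
            have hu : 0 < ‖x‖ ^ ((n : ℝ) - β) := Real.rpow_pos_of_pos hx0 _
            have hlt2 : ‖x‖ ^ ((n : ℝ) - β) < C * t ^ (-α) / lam := by
              rw [lt_div_iff₀ hlam]
              have h3 := mul_lt_mul_of_pos_right hlt hu
              rw [mul_assoc, inv_mul_cancel₀ hu.ne', mul_one] at h3
              linarith [h3]
            exact (Real.lt_rpow_inv_iff_of_pos (norm_nonneg x)
              (div_pos hA hlam).le hnβ).2 hlt2
          · exfalso
            have hxpos : 0 < ‖x‖ := lt_of_lt_of_le hR h
            have h2' : ‖x‖ ^ (-(n : ℝ) - β) ≤ (t ^ (α / β)) ^ (-(n : ℝ) - β) :=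
              (Real.rpow_le_rpow_iff_of_neg hxpos hR (by linarith)).2 h
            have h3 : ‖K x‖ ≤ C * t ^ (-(α * n / β)) := by
              rw [hkey, mul_assoc]
              calc ‖K x‖ ≤ C * t ^ α * ‖x‖ ^ (-(n : ℝ) - β) := hx2 h
                _ ≤ C * t ^ α * (t ^ (α / β)) ^ (-(n : ℝ) - β) := by
                    apply mul_le_mul_of_nonneg_left h2' hB.le
                _ = C * (t ^ α * (t ^ (α / β)) ^ (-(n : ℝ) - β)) := by ring
            linarith
      _ = ENNReal.ofReal ((C * t ^ (-α) / lam) ^ ((n : ℝ) / ((n : ℝ) - β))) *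
            volume (ball (0 : EuclideanSpace ℝ (Fin n)) 1) := by
          rw [Measure.addHaar_ball_of_pos volume 0 hr1, finrank_euclideanSpace_fin,
            hr1def, hpow _ _ (div_pos hA hlam).le]
  · -- small lam : contained in closed ball of radius r2
    push_neg at hcase
    set r2 : ℝ := (C * t ^ α / lam) ^ ((n : ℝ) + β)⁻¹ with hr2def
    have hr2 : 0 < r2 := Real.rpow_pos_of_pos (div_pos hB hlam) _
    have hRpow : (t ^ (α / β)) ^ ((n : ℝ) + β) =
        (C * t ^ α) / (C * t ^ (-(α * n / β))) := by
      rw [mul_div_mul_left _ _ hC.ne', ← Real.rpow_sub ht, ← Real.rpow_mul ht.le]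
      congr 1
      field_simp
      ring
    have hRr2 : t ^ (α / β) ≤ r2 := by
      rw [hr2def]
      refine (Real.le_rpow_inv_iff_of_pos hR.le (div_pos hB hlam).le hnβ').2 ?_
      rw [hRpow]
      exact div_le_div_of_nonneg_left hB.le hlam hcase
    calc volume {x : EuclideanSpace ℝ (Fin n) | lam < ‖K x‖}
        ≤ volume (closedBall (0 : EuclideanSpace ℝ (Fin n)) r2) := by
          apply measure_mono_ae
          filter_upwards [h1, h2] with x hx1 hx2 hmem0
          have hmem : lam < ‖K x‖ := hmem0
          show x ∈ closedBall (0 : EuclideanSpace ℝ (Fin n)) r2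
          rw [mem_closedBall_zero_iff]
          rcases le_total ‖x‖ (t ^ (α / β)) with h | h
          · exact h.trans hRr2
          · have hxpos : 0 < ‖x‖ := lt_of_lt_of_le hR h
            have hlt : lam < C * t ^ α * ‖x‖ ^ (-(n : ℝ) - β) :=
              lt_of_lt_of_le hmem (hx2 h)
            have hrw : ‖x‖ ^ (-(n : ℝ) - β) = (‖x‖ ^ ((n : ℝ) + β))⁻¹ := by
              rw [← Real.rpow_neg (norm_nonneg x)]
              congr 1
              ring
            rw [hrw] at hlt
            have hu : 0 < ‖x‖ ^ ((n : ℝ) + β) := Real.rpow_pos_of_pos hxpos _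
            have hlt2 : ‖x‖ ^ ((n : ℝ) + β) < C * t ^ α / lam := by
              rw [lt_div_iff₀ hlam]
              have h3 := mul_lt_mul_of_pos_right hlt hu
              rw [mul_assoc, inv_mul_cancel₀ hu.ne', mul_one] at h3
              linarith [h3]
            exact ((Real.lt_rpow_inv_iff_of_pos (norm_nonneg x)
              (div_pos hB hlam).le hnβ').2 hlt2).le
      _ = ENNReal.ofReal ((C * t ^ α / lam) ^ ((n : ℝ) / ((n : ℝ) + β))) *
            volume (ball (0 : EuclideanSpace ℝ (Fin n)) 1) := by
          rw [Measure.addHaar_closedBall volume 0 hr2.le, finrank_euclideanSpace_fin,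
            hr2def, hpow _ _ (div_pos hB hlam).le]

lemma my_strong (n : ℕ) (hn : 1 ≤ n) (α β : ℝ) (hα0 : 0 < α)
    (hβ0 : 0 < β) (hβn : β < n) :
    ∀ s : ℝ, 1 ≤ s → s < n / ((n : ℝ) - β) →
      ∃ C' : ℝ, 0 < C' ∧
        ∀ (t C : ℝ), 0 < t → 0 < C →
          ∀ K : EuclideanSpace ℝ (Fin n) → ℂ, Measurable K →
            (∀ᵐ x : EuclideanSpace ℝ (Fin n) ∂volume,
              ‖x‖ ≤ t ^ (α / β) → ‖K x‖ ≤ C * t ^ (-α) * ‖x‖ ^ (β - n)) →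
            (∀ᵐ x : EuclideanSpace ℝ (Fin n) ∂volume,
              t ^ (α / β) ≤ ‖x‖ → ‖K x‖ ≤ C * t ^ α * ‖x‖ ^ (-(n : ℝ) - β)) →
            eLpNorm K (ENNReal.ofReal s) volume
              ≤ ENNReal.ofReal (C * C' * t ^ (-(α * n / β) * (1 - 1 / s))) := by
  intro s hs1 hs2
  have hn0 : (0 : ℝ) < n := by exact_mod_cast hn
  have hnβ : 0 < (n : ℝ) - β := sub_pos.2 hβn
  have hnβ' : 0 < (n : ℝ) + β := by linarith
  have hs0 : (0 : ℝ) < s := lt_of_lt_of_le one_pos hs1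
  set δ : ℝ := (n : ℝ) / ((n : ℝ) - β) with hδdef
  set γ : ℝ := (n : ℝ) / ((n : ℝ) + β) with hγdef
  have hγ1 : γ < 1 := by
    rw [hγdef, div_lt_one hnβ']; linarith
  have hγs : γ < s := lt_of_lt_of_le hγ1 hs1
  have hsδ : s < δ := hs2
  set Vb : ℝ≥0∞ := volume (ball (0 : EuclideanSpace ℝ (Fin n)) 1) with hVbdef
  have hVbfin : Vb ≠ ∞ := measure_ball_lt_top.ne
  set M : ℝ≥0∞ := ENNReal.ofReal s *
    (ENNReal.ofReal (1 / (s - γ)) * Vb + ENNReal.ofReal (1 / (δ - s)) * Vb) with hMdef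
  have hMfin : M ≠ ∞ := by
    rw [hMdef]
    exact ENNReal.mul_ne_top ENNReal.ofReal_ne_top
      (ENNReal.add_ne_top.2 ⟨ENNReal.mul_ne_top ENNReal.ofReal_ne_top hVbfin,
        ENNReal.mul_ne_top ENNReal.ofReal_ne_top hVbfin⟩)
  have hMsfin : M ^ (1 / s) ≠ ∞ :=
    (ENNReal.rpow_lt_top_of_nonneg (by positivity) hMfin).ne
  refine ⟨max (M ^ (1 / s)).toReal 1, lt_of_lt_of_le one_pos (le_max_right _ _), ?_⟩
  intro t C ht hC K hK h1 h2
  set C' : ℝ := max (M ^ (1 / s)).toReal 1 with hC'def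
  have hMle : M ^ (1 / s) ≤ ENNReal.ofReal C' := by
    rw [← ENNReal.ofReal_toReal hMsfin]
    exact ENNReal.ofReal_le_ofReal (le_max_left _ _)
  set L : ℝ := C * t ^ (-(α * n / β)) with hLdef
  have hL : 0 < L := by rw [hLdef]; positivity
  have hA : 0 < C * t ^ (-α) := by positivity
  have hB : 0 < C * t ^ α := by positivity
  set Eexp : ℝ := (-(α * (n : ℝ) / β)) * (s - 1) with hEdef
  have hCs : 0 < C ^ s * t ^ Eexp := by positivity
  -- pointwise identity for the integrand
  have hintegrand : ∫⁻ x, (‖K x‖₊ : ℝ≥0∞) ^ s ∂volume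
      = ENNReal.ofReal s * ∫⁻ l in Ioi (0 : ℝ),
          volume {x : EuclideanSpace ℝ (Fin n) | l < ‖K x‖} * ENNReal.ofReal (l ^ (s - 1)) := by
    rw [← lintegral_rpow_eq_lintegral_meas_lt_mul volume
      (f := fun x : EuclideanSpace ℝ (Fin n) => ‖K x‖)
      (Filter.Eventually.of_forall fun x => norm_nonneg _) hK.norm.aemeasurable hs0]
    exact lintegral_congr fun x => by
      rw [← enorm_eq_nnnorm, ← ofReal_norm, ENNReal.ofReal_rpow_of_nonneg (norm_nonneg _) hs0.le]
  -- pointwise real identity used on both pieces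
  have hptwise : ∀ (D e : ℝ), 0 < D → ∀ l : ℝ, 0 < l →
      (D / l) ^ e * l ^ (s - 1) = D ^ e * l ^ (s - 1 - e) := by
    intro D e hD l hl
    have h4 : l ^ (s - 1 - e) * l ^ e = l ^ (s - 1) := by
      rw [← Real.rpow_add hl]; congr 1; ring
    rw [Real.div_rpow hD.le hl.le, div_mul_eq_mul_div, ← h4, ← mul_assoc,
      mul_div_cancel_right₀ _ (Real.rpow_pos_of_pos hl e).ne']
  -- the two pieces
  have hpiece1 : ∫⁻ l in Ioc (0 : ℝ) L,
      volume {x : EuclideanSpace ℝ (Fin n) | l < ‖K x‖} * ENNReal.ofReal (l ^ (s - 1))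
      ≤ ENNReal.ofReal (C ^ s * t ^ Eexp) * (ENNReal.ofReal (1 / (s - γ)) * Vb) := by
    have hmono : ∫⁻ l in Ioc (0 : ℝ) L,
        volume {x : EuclideanSpace ℝ (Fin n) | l < ‖K x‖} * ENNReal.ofReal (l ^ (s - 1))
        ≤ ∫⁻ l in Ioc (0 : ℝ) L,
            (ENNReal.ofReal ((C * t ^ α) ^ γ) * Vb) * ENNReal.ofReal (l ^ (s - 1 - γ)) := by
      apply lintegral_mono_ae
      filter_upwards [ae_restrict_mem measurableSet_Ioc] with l hl
      have hl0 : 0 < l := hl.1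
      have hbd := my_meas_bound n hn α β hα0 hβ0 hβn t C ht hC K h1 h2 l hl0
      rw [if_neg (not_lt.2 hl.2)] at hbd
      calc volume {x : EuclideanSpace ℝ (Fin n) | l < ‖K x‖} * ENNReal.ofReal (l ^ (s - 1))
          ≤ (ENNReal.ofReal ((C * t ^ α / l) ^ γ) * Vb) * ENNReal.ofReal (l ^ (s - 1)) :=
            mul_le_mul_left hbd _
        _ = (ENNReal.ofReal ((C * t ^ α) ^ γ) * Vb) * ENNReal.ofReal (l ^ (s - 1 - γ)) := by
            rw [mul_right_comm, ← ENNReal.ofReal_mul (by positivity),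
              hptwise _ _ hB l hl0,
              ENNReal.ofReal_mul (Real.rpow_nonneg hB.le _), mul_right_comm]
    have hval : ∫⁻ l in Ioc (0 : ℝ) L,
        (ENNReal.ofReal ((C * t ^ α) ^ γ) * Vb) * ENNReal.ofReal (l ^ (s - 1 - γ))
        = (ENNReal.ofReal ((C * t ^ α) ^ γ) * Vb) *
            ENNReal.ofReal (L ^ (s - γ) / (s - γ)) := by
      rw [lintegral_const_mul' _ _
        (ENNReal.mul_ne_top ENNReal.ofReal_ne_top hVbfin),
        my_lint_Ioc hL (by linarith : (-1 : ℝ) < s - 1 - γ),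
        show s - 1 - γ + 1 = s - γ by ring]
    have hconst : (C * t ^ α) ^ γ * L ^ (s - γ) = C ^ s * t ^ Eexp := by
      have h2 : α * γ + (-(α * n / β)) * (s - γ) = Eexp := by
        rw [hEdef, hγdef]; field_simp; ring
      exact my_rpow_mul_rpow hC ht (by ring : γ + (s - γ) = s) h2
    calc ∫⁻ l in Ioc (0 : ℝ) L,
        volume {x : EuclideanSpace ℝ (Fin n) | l < ‖K x‖} * ENNReal.ofReal (l ^ (s - 1))
        ≤ (ENNReal.ofReal ((C * t ^ α) ^ γ) * Vb) *
            ENNReal.ofReal (L ^ (s - γ) / (s - γ)) := hmono.trans hval.le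
      _ = ENNReal.ofReal (C ^ s * t ^ Eexp) * (ENNReal.ofReal (1 / (s - γ)) * Vb) := by
          rw [div_eq_mul_one_div, ENNReal.ofReal_mul (Real.rpow_nonneg hL.le _),
            ← hconst, ENNReal.ofReal_mul (Real.rpow_nonneg hB.le _)]
          ring
  have hpiece2 : ∫⁻ l in Ioi L,
      volume {x : EuclideanSpace ℝ (Fin n) | l < ‖K x‖} * ENNReal.ofReal (l ^ (s - 1))
      ≤ ENNReal.ofReal (C ^ s * t ^ Eexp) * (ENNReal.ofReal (1 / (δ - s)) * Vb) := by
    have hmono : ∫⁻ l in Ioi L,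
        volume {x : EuclideanSpace ℝ (Fin n) | l < ‖K x‖} * ENNReal.ofReal (l ^ (s - 1))
        ≤ ∫⁻ l in Ioi L,
            (ENNReal.ofReal ((C * t ^ (-α)) ^ δ) * Vb) * ENNReal.ofReal (l ^ (s - 1 - δ)) := by
      apply lintegral_mono_ae
      filter_upwards [ae_restrict_mem measurableSet_Ioi] with l hl
      have hl0 : 0 < l := hL.trans hl
      have hbd := my_meas_bound n hn α β hα0 hβ0 hβn t C ht hC K h1 h2 l hl0
      rw [if_pos (show C * t ^ (-(α * (n:ℝ) / β)) < l from hl)] at hbd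
      calc volume {x : EuclideanSpace ℝ (Fin n) | l < ‖K x‖} * ENNReal.ofReal (l ^ (s - 1))
          ≤ (ENNReal.ofReal ((C * t ^ (-α) / l) ^ δ) * Vb) * ENNReal.ofReal (l ^ (s - 1)) :=
            mul_le_mul_left hbd _
        _ = (ENNReal.ofReal ((C * t ^ (-α)) ^ δ) * Vb) * ENNReal.ofReal (l ^ (s - 1 - δ)) := by
            rw [mul_right_comm, ← ENNReal.ofReal_mul (by positivity),
              hptwise _ _ hA l hl0,
              ENNReal.ofReal_mul (Real.rpow_nonneg hA.le _), mul_right_comm]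
    have hval : ∫⁻ l in Ioi L,
        (ENNReal.ofReal ((C * t ^ (-α)) ^ δ) * Vb) * ENNReal.ofReal (l ^ (s - 1 - δ))
        = (ENNReal.ofReal ((C * t ^ (-α)) ^ δ) * Vb) *
            ENNReal.ofReal (L ^ (s - δ) / (δ - s)) := by
      rw [lintegral_const_mul' _ _
        (ENNReal.mul_ne_top ENNReal.ofReal_ne_top hVbfin),
        my_lint_Ioi hL (by linarith : s - 1 - δ < -1),
        show s - 1 - δ + 1 = s - δ by ring, neg_sub]
    have hconst : (C * t ^ (-α)) ^ δ * L ^ (s - δ) = C ^ s * t ^ Eexp := by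
      have h2 : (-α) * δ + (-(α * n / β)) * (s - δ) = Eexp := by
        rw [hEdef, hδdef]; field_simp; ring
      exact my_rpow_mul_rpow hC ht (by ring : δ + (s - δ) = s) h2
    calc ∫⁻ l in Ioi L,
        volume {x : EuclideanSpace ℝ (Fin n) | l < ‖K x‖} * ENNReal.ofReal (l ^ (s - 1))
        ≤ (ENNReal.ofReal ((C * t ^ (-α)) ^ δ) * Vb) *
            ENNReal.ofReal (L ^ (s - δ) / (δ - s)) := hmono.trans hval.le
      _ = ENNReal.ofReal (C ^ s * t ^ Eexp) * (ENNReal.ofReal (1 / (δ - s)) * Vb) := by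
          rw [div_eq_mul_one_div, ENNReal.ofReal_mul (Real.rpow_nonneg hL.le _),
            ← hconst, ENNReal.ofReal_mul (Real.rpow_nonneg hA.le _)]
          ring
  -- assemble the lintegral bound
  have hsplit : ∫⁻ l in Ioi (0 : ℝ),
      volume {x : EuclideanSpace ℝ (Fin n) | l < ‖K x‖} * ENNReal.ofReal (l ^ (s - 1))
      = (∫⁻ l in Ioc (0 : ℝ) L,
          volume {x : EuclideanSpace ℝ (Fin n) | l < ‖K x‖} * ENNReal.ofReal (l ^ (s - 1)))
        + ∫⁻ l in Ioi L,
          volume {x : EuclideanSpace ℝ (Fin n) | l < ‖K x‖} * ENNReal.ofReal (l ^ (s - 1)) := by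
    rw [← Ioc_union_Ioi_eq_Ioi hL.le, lintegral_union measurableSet_Ioi (Ioc_disjoint_Ioi le_rfl)]
  have htotal : ∫⁻ x, (‖K x‖₊ : ℝ≥0∞) ^ s ∂volume
      ≤ M * ENNReal.ofReal (C ^ s * t ^ Eexp) := by
    rw [hintegrand, hsplit]
    calc ENNReal.ofReal s * ((∫⁻ l in Ioc (0 : ℝ) L,
          volume {x : EuclideanSpace ℝ (Fin n) | l < ‖K x‖} * ENNReal.ofReal (l ^ (s - 1)))
        + ∫⁻ l in Ioi L,
          volume {x : EuclideanSpace ℝ (Fin n) | l < ‖K x‖} * ENNReal.ofReal (l ^ (s - 1)))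
        ≤ ENNReal.ofReal s * (ENNReal.ofReal (C ^ s * t ^ Eexp) * (ENNReal.ofReal (1 / (s - γ)) * Vb)
            + ENNReal.ofReal (C ^ s * t ^ Eexp) * (ENNReal.ofReal (1 / (δ - s)) * Vb)) :=
          mul_le_mul_right (add_le_add hpiece1 hpiece2) _
      _ = M * ENNReal.ofReal (C ^ s * t ^ Eexp) := by rw [hMdef]; ring
  -- conclude
  have hp0 : (ENNReal.ofReal s) ≠ 0 := (ENNReal.ofReal_pos.2 hs0).ne'
  calc eLpNorm K (ENNReal.ofReal s) volume
      = (∫⁻ x, (‖K x‖₊ : ℝ≥0∞) ^ s ∂volume) ^ (1 / s) := by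
        rw [eLpNorm_eq_lintegral_rpow_enorm_toReal hp0 ENNReal.ofReal_ne_top,
          ENNReal.toReal_ofReal hs0.le]
        rfl
    _ ≤ (M * ENNReal.ofReal (C ^ s * t ^ Eexp)) ^ (1 / s) :=
        ENNReal.rpow_le_rpow htotal (by positivity)
    _ = M ^ (1 / s) * ENNReal.ofReal (C * t ^ (Eexp * (1 / s))) := by
        rw [ENNReal.mul_rpow_of_nonneg _ _ (by positivity : (0:ℝ) ≤ 1 / s),
          ENNReal.ofReal_rpow_of_nonneg hCs.le (by positivity),
          Real.mul_rpow (Real.rpow_nonneg hC.le _) (Real.rpow_nonneg ht.le _),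
          ← Real.rpow_mul hC.le, ← Real.rpow_mul ht.le,
          mul_one_div_cancel hs0.ne', Real.rpow_one]
    _ ≤ ENNReal.ofReal C' * ENNReal.ofReal (C * t ^ (Eexp * (1 / s))) :=
        mul_le_mul_left hMle _
    _ = ENNReal.ofReal (C * C' * t ^ (-(α * n / β) * (1 - 1 / s))) := by
        rw [← ENNReal.ofReal_mul (le_max_of_le_right zero_le_one),
          show Eexp * (1 / s) = -(α * n / β) * (1 - 1 / s) by
            rw [hEdef]; field_simp; try ring]
        congr 1
        ring

lemma my_weak (n : ℕ) (hn : 1 ≤ n) (α β : ℝ) (hα0 : 0 < α)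
    (hβ0 : 0 < β) (hβn : β < n) :
    (∃ C'' : ℝ, 0 < C'' ∧
      ∀ (t C : ℝ), 0 < t → 0 < C →
        ∀ K : EuclideanSpace ℝ (Fin n) → ℂ, Measurable K →
          (∀ᵐ x : EuclideanSpace ℝ (Fin n) ∂volume,
            ‖x‖ ≤ t ^ (α / β) → ‖K x‖ ≤ C * t ^ (-α) * ‖x‖ ^ (β - n)) →
          (∀ᵐ x : EuclideanSpace ℝ (Fin n) ∂volume,
            t ^ (α / β) ≤ ‖x‖ → ‖K x‖ ≤ C * t ^ α * ‖x‖ ^ (-(n : ℝ) - β)) →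
          ∀ lam : ℝ, 0 < lam →
            ENNReal.ofReal lam *
                (volume {x : EuclideanSpace ℝ (Fin n) | lam < ‖K x‖}) ^ (((n : ℝ) - β) / n)
              ≤ ENNReal.ofReal (C * C'' * t ^ (-α))) := by
  have hn0 : (0 : ℝ) < n := by exact_mod_cast hn
  have hnβ : 0 < (n : ℝ) - β := sub_pos.2 hβn
  have hnβ' : 0 < (n : ℝ) + β := by linarith
  set θ : ℝ := ((n : ℝ) - β) / n with hθdef
  have hθ : 0 < θ := div_pos hnβ hn0
  set Vb : ℝ≥0∞ := volume (ball (0 : EuclideanSpace ℝ (Fin n)) 1) with hVbdef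
  have hVbfin : Vb ^ θ < ∞ :=
    ENNReal.rpow_lt_top_of_nonneg hθ.le measure_ball_lt_top.ne
  refine ⟨max (Vb ^ θ).toReal 1, lt_of_lt_of_le one_pos (le_max_right _ _), ?_⟩
  intro t C ht hC K hK h1 h2 lam hlam
  set C'' : ℝ := max (Vb ^ θ).toReal 1 with hC''def
  have hVble : Vb ^ θ ≤ ENNReal.ofReal C'' := by
    rw [← ENNReal.ofReal_toReal hVbfin.ne]
    exact ENNReal.ofReal_le_ofReal (le_max_left _ _)
  have hA : 0 < C * t ^ (-α) := by positivity
  have hB : 0 < C * t ^ α := by positivity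
  have hbound := my_meas_bound n hn α β hα0 hβ0 hβn t C ht hC K h1 h2 lam hlam
  have hfinal : ∀ y : ℝ, 0 ≤ y → y ≤ C * t ^ (-α) →
      ENNReal.ofReal y * (Vb ^ θ) ≤ ENNReal.ofReal (C * C'' * t ^ (-α)) := by
    intro y hy0 hy
    calc ENNReal.ofReal y * Vb ^ θ ≤ ENNReal.ofReal (C * t ^ (-α)) * ENNReal.ofReal C'' :=
          mul_le_mul (ENNReal.ofReal_le_ofReal hy) hVble zero_le zero_le
      _ = ENNReal.ofReal (C * C'' * t ^ (-α)) := by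
          rw [← ENNReal.ofReal_mul hA.le]
          congr 1
          ring
  by_cases hcase : C * t ^ (-(α * n / β)) < lam
  · rw [if_pos hcase] at hbound
    have hre : ((C * t ^ (-α) / lam) ^ ((n : ℝ) / ((n : ℝ) - β))) ^ θ
        = C * t ^ (-α) / lam := by
      rw [← Real.rpow_mul (div_pos hA hlam).le]
      have : (n : ℝ) / ((n : ℝ) - β) * θ = 1 := by
        rw [hθdef]; field_simp
      rw [this, Real.rpow_one]
    calc ENNReal.ofReal lam *
          (volume {x : EuclideanSpace ℝ (Fin n) | lam < ‖K x‖}) ^ θ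
        ≤ ENNReal.ofReal lam *
            (ENNReal.ofReal ((C * t ^ (-α) / lam) ^ ((n : ℝ) / ((n : ℝ) - β))) * Vb) ^ θ :=
          mul_le_mul_right (ENNReal.rpow_le_rpow hbound hθ.le) _
      _ = ENNReal.ofReal lam *
            (ENNReal.ofReal (C * t ^ (-α) / lam) * Vb ^ θ) := by
          rw [ENNReal.mul_rpow_of_nonneg _ _ hθ.le,
            ENNReal.ofReal_rpow_of_nonneg (by positivity) hθ.le, hre]
      _ = ENNReal.ofReal (lam * (C * t ^ (-α) / lam)) * Vb ^ θ := by
          rw [ENNReal.ofReal_mul hlam.le, mul_assoc]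
      _ ≤ ENNReal.ofReal (C * C'' * t ^ (-α)) := by
          apply hfinal _ (by positivity)
          rw [mul_div_cancel₀ _ hlam.ne']
  · rw [if_neg hcase] at hbound
    push_neg at hcase
    set κ : ℝ := ((n : ℝ) - β) / ((n : ℝ) + β) with hκdef
    have hκ0 : 0 ≤ κ := by positivity
    have hκ1 : κ ≤ 1 := by
      rw [hκdef, div_le_one hnβ']
      linarith
    have hγθ : (n : ℝ) / ((n : ℝ) + β) * θ = κ := by
      rw [hθdef, hκdef]; field_simp
    have hre : ((C * t ^ α / lam) ^ ((n : ℝ) / ((n : ℝ) + β))) ^ θ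
        = (C * t ^ α / lam) ^ κ := by
      rw [← Real.rpow_mul (div_pos hB hlam).le, hγθ]
    have hkey : lam * (C * t ^ α / lam) ^ κ ≤ C * t ^ (-α) := by
      have e1 : lam * (C * t ^ α / lam) ^ κ = (C * t ^ α) ^ κ * lam ^ (1 - κ) := by
        rw [Real.div_rpow hB.le hlam.le, Real.rpow_sub hlam, Real.rpow_one]
        ring
      have e2 : lam ^ (1 - κ) ≤ (C * t ^ (-(α * n / β))) ^ (1 - κ) :=
        Real.rpow_le_rpow hlam.le hcase (by linarith)
      have e3 : (C * t ^ α) ^ κ * (C * t ^ (-(α * n / β))) ^ (1 - κ) = C * t ^ (-α) := by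
        have h2 : α * κ + (-(α * n / β)) * (1 - κ) = -α := by
          rw [hκdef]; field_simp; ring
        have := my_rpow_mul_rpow hC ht (by ring : κ + (1 - κ) = (1:ℝ)) h2
        rw [this, Real.rpow_one]
      calc lam * (C * t ^ α / lam) ^ κ = (C * t ^ α) ^ κ * lam ^ (1 - κ) := e1
        _ ≤ (C * t ^ α) ^ κ * (C * t ^ (-(α * n / β))) ^ (1 - κ) :=
            mul_le_mul_of_nonneg_left e2 (Real.rpow_nonneg hB.le _)
        _ = C * t ^ (-α) := e3
    calc ENNReal.ofReal lam *
          (volume {x : EuclideanSpace ℝ (Fin n) | lam < ‖K x‖}) ^ θ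
        ≤ ENNReal.ofReal lam *
            (ENNReal.ofReal ((C * t ^ α / lam) ^ ((n : ℝ) / ((n : ℝ) + β))) * Vb) ^ θ :=
          mul_le_mul_right (ENNReal.rpow_le_rpow hbound hθ.le) _
      _ = ENNReal.ofReal lam *
            (ENNReal.ofReal ((C * t ^ α / lam) ^ κ) * Vb ^ θ) := by
          rw [ENNReal.mul_rpow_of_nonneg _ _ hθ.le,
            ENNReal.ofReal_rpow_of_nonneg (by positivity) hθ.le, hre]
      _ = ENNReal.ofReal (lam * (C * t ^ α / lam) ^ κ) * Vb ^ θ := by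
          rw [ENNReal.ofReal_mul hlam.le, mul_assoc]
      _ ≤ ENNReal.ofReal (C * C'' * t ^ (-α)) := hfinal _ (by positivity) hkey

/-- Lemma 3.2(1c): the case `β < n`.  If `K` obeys the pointwise bounds of
Lemma 3.1(1) for `β < n` (with constant `C` and time `t`), then
(a) for every real `s ∈ [1, n/(n-β))`, `‖K‖_{L^s} ≤ C C' t^{-(αn/β)(1-1/s)}`
with `C'` depending only on `n, α, β, s`, and
(b) `K` lies in weak `L^{n/(n-β)}` with `λ · vol{|K| > λ}^{(n-β)/n} ≤ C C'' t^{-α}`,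
with `C''` depending only on `n, α, β`. -/
theorem Ls_estimate_S_beta_lt_n
    (n : ℕ) (hn : 1 ≤ n) (α β : ℝ) (hα0 : 0 < α) (hα1 : α < 1)
    (hβ0 : 0 < β) (hβn : β < n) :
    (∀ s : ℝ, 1 ≤ s → s < n / ((n : ℝ) - β) →
      ∃ C' : ℝ, 0 < C' ∧
        ∀ (t C : ℝ), 0 < t → 0 < C →
          ∀ K : EuclideanSpace ℝ (Fin n) → ℂ, Measurable K →
            (∀ᵐ x : EuclideanSpace ℝ (Fin n) ∂volume,
              ‖x‖ ≤ t ^ (α / β) → ‖K x‖ ≤ C * t ^ (-α) * ‖x‖ ^ (β - n)) →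
            (∀ᵐ x : EuclideanSpace ℝ (Fin n) ∂volume,
              t ^ (α / β) ≤ ‖x‖ → ‖K x‖ ≤ C * t ^ α * ‖x‖ ^ (-(n : ℝ) - β)) →
            eLpNorm K (ENNReal.ofReal s) volume
              ≤ ENNReal.ofReal (C * C' * t ^ (-(α * n / β) * (1 - 1 / s)))) ∧
    (∃ C'' : ℝ, 0 < C'' ∧
      ∀ (t C : ℝ), 0 < t → 0 < C →
        ∀ K : EuclideanSpace ℝ (Fin n) → ℂ, Measurable K →
          (∀ᵐ x : EuclideanSpace ℝ (Fin n) ∂volume,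
            ‖x‖ ≤ t ^ (α / β) → ‖K x‖ ≤ C * t ^ (-α) * ‖x‖ ^ (β - n)) →
          (∀ᵐ x : EuclideanSpace ℝ (Fin n) ∂volume,
            t ^ (α / β) ≤ ‖x‖ → ‖K x‖ ≤ C * t ^ α * ‖x‖ ^ (-(n : ℝ) - β)) →
          ∀ lam : ℝ, 0 < lam →
            ENNReal.ofReal lam *
                (volume {x : EuclideanSpace ℝ (Fin n) | lam < ‖K x‖}) ^ (((n : ℝ) - β) / n)
              ≤ ENNReal.ofReal (C * C'' * t ^ (-α))) :=
  ⟨my_strong n hn α β hα0 hβ0 hβn, my_weak n hn α β hα0 hβ0 hβn⟩
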